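/- arXiv:1005.4319 — 2 statements merged into one kernel-verified Lean document; each statement's English description precedes it below -/
import Mathlib

section
/- Let A be a Banach algebra with A***A** ⊆ A* (for every Φ in A*** and F in A**, the functional G ↦ <Φ, FG> on A** is represented by an element of A*). If A** (with the first Arens product) is weakly amenable, then A is weakly amenable. -/
open NormedSpace ContinuousLinearMap Filter

set_option maxHeartbeats 1000000

noncomputable section

/-- The topological dual of a normed space, as `NormedSpace.Dual` was in the older Mathlib. -/
abbrev NormedSpace.Dual (𝕜 : Type*) [NontriviallyNormedField 𝕜] (E : Type*)
    [SeminormedAddCommGroup E] [NormedSpace 𝕜 E] : Type _ :=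
  E →L[𝕜] 𝕜

/-- The adjoint (dual map) of a continuous linear map: `dMap T φ = φ ∘ T`. -/
def dMap {E F : Type*} [NormedAddCommGroup E] [NormedSpace ℝ E]
    [NormedAddCommGroup F] [NormedSpace ℝ F] (T : E →L[ℝ] F) :
    Dual ℝ F →L[ℝ] Dual ℝ E :=
  (ContinuousLinearMap.compL ℝ E F ℝ).flip T

/-- The double adjoint of a continuous linear map. -/
def ddMap {E F : Type*} [NormedAddCommGroup E] [NormedSpace ℝ E]
    [NormedAddCommGroup F] [NormedSpace ℝ F] (T : E →L[ℝ] F) :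
    Dual ℝ (Dual ℝ E) →L[ℝ] Dual ℝ (Dual ℝ F) :=
  dMap (dMap T)

/-- The (first, left) Arens extension of a bounded bilinear map `m : E × F → G` to the
biduals, via the classical three steps:
`⟨g'·e, f⟩ = ⟨g', m e f⟩`, `⟨Ψ·g', e⟩ = ⟨Ψ, g'·e⟩`, `⟨arensExt m Φ Ψ, g'⟩ = ⟨Φ, Ψ·g'⟩`. -/
def arensExt {E F G : Type*} [NormedAddCommGroup E] [NormedSpace ℝ E]
    [NormedAddCommGroup F] [NormedSpace ℝ F] [NormedAddCommGroup G] [NormedSpace ℝ G]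
    (m : E →L[ℝ] F →L[ℝ] G) :
    Dual ℝ (Dual ℝ E) →L[ℝ] Dual ℝ (Dual ℝ F) →L[ℝ] Dual ℝ (Dual ℝ G) :=
  let s1 : E →L[ℝ] (Dual ℝ G →L[ℝ] Dual ℝ F) :=
    ((ContinuousLinearMap.compL ℝ F G ℝ).flip).comp m
  let s2 : Dual ℝ G →L[ℝ] (Dual ℝ (Dual ℝ F) →L[ℝ] Dual ℝ E) :=
    ((ContinuousLinearMap.compL ℝ E (Dual ℝ F) ℝ).flip).comp s1.flip
  (((ContinuousLinearMap.compL ℝ (Dual ℝ G) (Dual ℝ E) ℝ).flip).comp s2.flip).flip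

/-- The first Arens product on the bidual of a (possibly non-unital) Banach algebra:
`⟨F G, a'⟩ = ⟨F, G·a'⟩` where `⟨G·a', a⟩ = ⟨G, a'·a⟩` and `⟨a'·a, b⟩ = ⟨a', a*b⟩`. -/
def arens1 (A : Type*) [NonUnitalNormedRing A] [NormedSpace ℝ A]
    [IsScalarTower ℝ A A] [SMulCommClass ℝ A A] :
    Dual ℝ (Dual ℝ A) →L[ℝ] Dual ℝ (Dual ℝ A) →L[ℝ] Dual ℝ (Dual ℝ A) :=
  arensExt (ContinuousLinearMap.mul ℝ A)

/-- The second Arens product on the bidual of a (possibly non-unital) Banach algebra: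
`⟨F ∘ G, a'⟩ = ⟨G, a'∘F⟩` where `⟨a'∘F, a⟩ = ⟨F, a∘a'⟩` and `⟨a∘a', b⟩ = ⟨a', b*a⟩`. -/
def arens2 (A : Type*) [NonUnitalNormedRing A] [NormedSpace ℝ A]
    [IsScalarTower ℝ A A] [SMulCommClass ℝ A A] :
    Dual ℝ (Dual ℝ A) →L[ℝ] Dual ℝ (Dual ℝ A) →L[ℝ] Dual ℝ (Dual ℝ A) :=
  (arensExt ((ContinuousLinearMap.mul ℝ A).flip)).flip

/-- `f`, a map from a dual space to a normed space, is weak-star-to-weak continuous. -/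
def WstarToWeakContinuous {E F : Type*} [NormedAddCommGroup E] [NormedSpace ℝ E]
    [NormedAddCommGroup F] [NormedSpace ℝ F]
    (f : Dual ℝ E → F) : Prop :=
  Continuous fun x : WeakDual ℝ E => toWeakSpace ℝ F (f x)
variable {A : Type*} [NonUnitalNormedRing A] [NormedSpace ℝ A]
  [IsScalarTower ℝ A A] [SMulCommClass ℝ A A] [CompleteSpace A]

variable (A) in
/-- The left action of `a ∈ A` on `a' ∈ A*`: `⟨a·a', x⟩ = ⟨a', x*a⟩`. -/
def dualActL (a : A) : Dual ℝ A →L[ℝ] Dual ℝ A :=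
  dMap ((ContinuousLinearMap.mul ℝ A).flip a)

variable (A) in
/-- The right action of `a ∈ A` on `a' ∈ A*`: `⟨a'·a, x⟩ = ⟨a', a*x⟩`. -/
def dualActR (a : A) : Dual ℝ A →L[ℝ] Dual ℝ A :=
  dMap (ContinuousLinearMap.mul ℝ A a)

variable (A) in
/-- The left action of `H ∈ A**` (first Arens product) on `Φ ∈ A***`:
`⟨H·Φ, G⟩ = ⟨Φ, G H⟩`. -/
def triActL (H : Dual ℝ (Dual ℝ A)) :
    Dual ℝ (Dual ℝ (Dual ℝ A)) →L[ℝ] Dual ℝ (Dual ℝ (Dual ℝ A)) :=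
  dMap (E := Dual ℝ (Dual ℝ A)) (F := Dual ℝ (Dual ℝ A)) ((arens1 A).flip H)

variable (A) in
/-- The right action of `H ∈ A**` (first Arens product) on `Φ ∈ A***`:
`⟨Φ·H, G⟩ = ⟨Φ, H G⟩`. -/
def triActR (H : Dual ℝ (Dual ℝ A)) :
    Dual ℝ (Dual ℝ (Dual ℝ A)) →L[ℝ] Dual ℝ (Dual ℝ (Dual ℝ A)) :=
  dMap (E := Dual ℝ (Dual ℝ A)) (F := Dual ℝ (Dual ℝ A)) (arens1 A H)

set_option linter.unusedSectionVars false

variable (A) in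
/-- `rAct a a' = a' ∘ (a * ·)`, as a continuous bilinear map. -/
def rAct : A →L[ℝ] (Dual ℝ A →L[ℝ] Dual ℝ A) :=
  ((ContinuousLinearMap.compL ℝ A A ℝ).flip).comp (ContinuousLinearMap.mul ℝ A)

lemma rAct_apply (a : A) (a' : Dual ℝ A) (b : A) : rAct A a a' b = a' (a * b) := rfl

lemma arens1_apply (F G : Dual ℝ (Dual ℝ A)) (a' : Dual ℝ A) :
    arens1 A F G a' = F (G.comp ((rAct A).flip a')) := rfl

lemma arens1_incl (a b : A) :
    arens1 A (inclusionInDoubleDual ℝ A a) (inclusionInDoubleDual ℝ A b)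
      = inclusionInDoubleDual ℝ A (a * b) := rfl

/-- The double adjoint of a derivation `D : A → A*` is a derivation `A** → A***`
(first Arens product), given the condition `A*** · A** ⊆ A*`. -/
lemma ddMap_deriv
    (hcond : ∀ (Φ : Dual ℝ (Dual ℝ (Dual ℝ A))) (F : Dual ℝ (Dual ℝ A)),
      ∃ a' : Dual ℝ A, ∀ G : Dual ℝ (Dual ℝ A), Φ (arens1 A F G) = G a')
    (D : A →L[ℝ] Dual ℝ A)
    (hD : ∀ a b : A, D (a * b) = dualActL A a (D b) + dualActR A b (D a))
    (F G : Dual ℝ (Dual ℝ A)) :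
    ddMap D (arens1 A F G) = triActL A F (ddMap D G) + triActR A G (ddMap D F) := by
  ext H
  obtain ⟨c, hc⟩ := hcond (ddMap D G) H
  have key : G.comp ((rAct A).flip (H.comp D)) = c + (arens1 A G H).comp D := by
    ext a
    have hca : c a = ddMap D G (arens1 A H (inclusionInDoubleDual ℝ A a)) :=
      (hc (inclusionInDoubleDual ℝ A a)).symm
    have inner : rAct A a (H.comp D) =
        (arens1 A H (inclusionInDoubleDual ℝ A a)).comp D
          + H.comp ((rAct A).flip (D a)) := by
      ext b
      show H (D (a * b)) = _
      have e1 : dualActL A a (D b)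
          = (inclusionInDoubleDual ℝ A a).comp ((rAct A).flip (D b)) := by ext x; rfl
      rw [hD a b, map_add, e1]
      rfl
    calc (G.comp ((rAct A).flip (H.comp D))) a
        = G (rAct A a (H.comp D)) := rfl
      _ = G ((arens1 A H (inclusionInDoubleDual ℝ A a)).comp D
            + H.comp ((rAct A).flip (D a))) := by rw [inner]
      _ = G ((arens1 A H (inclusionInDoubleDual ℝ A a)).comp D)
            + G (H.comp ((rAct A).flip (D a))) := map_add G _ _
      _ = ddMap D G (arens1 A H (inclusionInDoubleDual ℝ A a))
            + G (H.comp ((rAct A).flip (D a))) := rfl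
      _ = c a + G (H.comp ((rAct A).flip (D a))) := by rw [hca]
      _ = (c + (arens1 A G H).comp D) a := rfl
  calc ddMap D (arens1 A F G) H
      = F (G.comp ((rAct A).flip (H.comp D))) := rfl
    _ = F (c + (arens1 A G H).comp D) := by rw [key]
    _ = F c + F ((arens1 A G H).comp D) := map_add F _ _
    _ = (triActL A F (ddMap D G) + triActR A G (ddMap D F)) H := by rw [← hc F]; rfl
/-- If `A*** · A** ⊆ A*` and `A**` (first Arens product) is weakly amenable, then `A` is
weakly amenable. -/
theorem weaklyAmenable_of_bidual_tripleDualCond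
    (hcond : ∀ (Φ : Dual ℝ (Dual ℝ (Dual ℝ A))) (F : Dual ℝ (Dual ℝ A)),
      ∃ a' : Dual ℝ A, ∀ G : Dual ℝ (Dual ℝ A), Φ (arens1 A F G) = G a')
    (hamen : ∀ 𝒟 : Dual ℝ (Dual ℝ A) →L[ℝ] Dual ℝ (Dual ℝ (Dual ℝ A)),
      (∀ F G : Dual ℝ (Dual ℝ A),
        𝒟 (arens1 A F G) = triActL A F (𝒟 G) + triActR A G (𝒟 F)) →
      ∃ Φ : Dual ℝ (Dual ℝ (Dual ℝ A)), ∀ F : Dual ℝ (Dual ℝ A),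
        𝒟 F = triActL A F Φ - triActR A F Φ)
    (D : A →L[ℝ] Dual ℝ A)
    (hD : ∀ a b : A, D (a * b) = dualActL A a (D b) + dualActR A b (D a)) :
    ∃ f : Dual ℝ A, ∀ a : A, D a = dualActL A a f - dualActR A a f := by
  obtain ⟨Φ, hΦ⟩ := hamen (ddMap D) (ddMap_deriv hcond D hD)
  refine ⟨Φ.comp (inclusionInDoubleDual ℝ A), fun a => ?_⟩
  ext b
  calc D a b = ddMap D (inclusionInDoubleDual ℝ A a) (inclusionInDoubleDual ℝ A b) := rfl
    _ = triActL A (inclusionInDoubleDual ℝ A a) Φ (inclusionInDoubleDual ℝ A b)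
        - triActR A (inclusionInDoubleDual ℝ A a) Φ (inclusionInDoubleDual ℝ A b) := by
        rw [hΦ (inclusionInDoubleDual ℝ A a)]
        exact ContinuousLinearMap.sub_apply _ _ _
    _ = Φ (arens1 A (inclusionInDoubleDual ℝ A b) (inclusionInDoubleDual ℝ A a))
        - Φ (arens1 A (inclusionInDoubleDual ℝ A a) (inclusionInDoubleDual ℝ A b)) := rfl
    _ = Φ (inclusionInDoubleDual ℝ A (b * a)) - Φ (inclusionInDoubleDual ℝ A (a * b)) := by
        rw [arens1_incl, arens1_incl]
    _ = (dualActL A a (Φ.comp (inclusionInDoubleDual ℝ A))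
        - dualActR A a (Φ.comp (inclusionInDoubleDual ℝ A))) b := rfl
end
end

section
/- Let A be a Banach algebra and D : A → A* a surjective derivation such that D''(A**)·A** ⊆ A*, where D'' : A** → A*** is the double adjoint. Then A is Arens regular. -/
open NormedSpace ContinuousLinearMap Filter

noncomputable section

variable {A : Type*} [NonUnitalNormedRing A] [NormedSpace ℝ A]
  [IsScalarTower ℝ A A] [SMulCommClass ℝ A A] [CompleteSpace A]

/-- Via the open mapping theorem and Hahn–Banach: since `D` is surjective, every
evaluation functional on the bidual is of the form `ddMap D g`. -/
theorem exists_eval_repr {A : Type*} [NormedAddCommGroup A] [NormedSpace ℝ A]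
    [CompleteSpace A] (D : A →L[ℝ] Dual ℝ A) (hsurj : Function.Surjective D)
    (φ : Dual ℝ A) :
    ∃ g : Dual ℝ (Dual ℝ A), ∀ Ψ : Dual ℝ (Dual ℝ A), ddMap D g Ψ = Ψ φ := by
  obtain ⟨C, hC, hpre⟩ := D.exists_preimage_norm_le hsurj
  have hKnorm : ∀ Ψ : Dual ℝ (Dual ℝ A), ‖Ψ‖ ≤ C * ‖dMap D Ψ‖ := by
    intro Ψ
    refine Ψ.opNorm_le_bound (by positivity) (fun ψ => ?_)
    obtain ⟨a, ha, hna⟩ := hpre ψ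
    calc ‖Ψ ψ‖ = ‖dMap D Ψ a‖ := by rw [← ha]; rfl
      _ ≤ ‖dMap D Ψ‖ * ‖a‖ := (dMap D Ψ).le_opNorm a
      _ ≤ ‖dMap D Ψ‖ * (C * ‖ψ‖) := by gcongr
      _ = C * ‖dMap D Ψ‖ * ‖ψ‖ := by ring
  have hKinj : Function.Injective ((dMap D).toLinearMap) := by
    intro Ψ₁ Ψ₂ h
    have h2 : dMap D Ψ₁ = dMap D Ψ₂ := h
    have h3 := hKnorm (Ψ₁ - Ψ₂)
    rw [map_sub, h2, sub_self, norm_zero, mul_zero] at h3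
    exact sub_eq_zero.mp (norm_le_zero_iff.mp h3)
  let e := LinearEquiv.ofInjective (dMap D).toLinearMap hKinj
  have hKe : ∀ r : LinearMap.range (dMap D).toLinearMap,
      dMap D (e.symm r) = (r : Dual ℝ A) := by
    intro r
    have h1 : (e (e.symm r) : Dual ℝ A) = (r : Dual ℝ A) :=
      congrArg Subtype.val (e.apply_symm_apply r)
    have h2 : (e (e.symm r) : Dual ℝ A) = dMap D (e.symm r) :=
      LinearEquiv.ofInjective_apply (dMap D).toLinearMap (e.symm r)
    rw [← h2, h1]
  let fl : LinearMap.range (dMap D).toLinearMap →ₗ[ℝ] ℝ :=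
    ((inclusionInDoubleDual ℝ (Dual ℝ A) φ).toLinearMap).comp e.symm.toLinearMap
  have hfl : ∀ r, fl r = (e.symm r) φ := fun r => rfl
  have hflbound : ∀ r, ‖fl r‖ ≤ C * ‖φ‖ * ‖r‖ := by
    intro r
    rw [hfl]
    calc ‖(e.symm r) φ‖ ≤ ‖e.symm r‖ * ‖φ‖ := (e.symm r : Dual ℝ (Dual ℝ A)).le_opNorm φ
      _ ≤ (C * ‖dMap D (e.symm r)‖) * ‖φ‖ :=
          mul_le_mul_of_nonneg_right (hKnorm _) (norm_nonneg φ)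
      _ = C * ‖φ‖ * ‖r‖ := by
          rw [hKe r]; have hn : ‖(r : Dual ℝ A)‖ = ‖r‖ := rfl
          rw [hn]; ring
  obtain ⟨g, hg, -⟩ := exists_extension_norm_eq _ (LinearMap.mkContinuous fl (C * ‖φ‖) hflbound)
  refine ⟨g, fun Ψ => ?_⟩
  have hmem : dMap D Ψ ∈ LinearMap.range (dMap D).toLinearMap := ⟨Ψ, rfl⟩
  have h1 : ddMap D g Ψ = g (dMap D Ψ) := rfl
  have h2 : g (dMap D Ψ) = fl ⟨dMap D Ψ, hmem⟩ := by
    have := hg ⟨dMap D Ψ, hmem⟩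
    rw [this]; rfl
  have h4 : e.symm ⟨dMap D Ψ, hmem⟩ = Ψ := by
    have h5 : e Ψ = ⟨dMap D Ψ, hmem⟩ :=
      Subtype.ext (LinearEquiv.ofInjective_apply (dMap D).toLinearMap Ψ)
    rw [← h5, e.symm_apply_apply]
  rw [h1, h2, hfl, h4]

/-- If `D : A → A*` is a surjective derivation with `D''(A**) · A** ⊆ A*`, then `A` is
Arens regular. -/
theorem arensRegular_of_surjective_derivation
    (D : A →L[ℝ] Dual ℝ A)
    (hD : ∀ a b : A,
      D (a * b) = dMap ((ContinuousLinearMap.mul ℝ A).flip a) (D b) +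
        dMap (ContinuousLinearMap.mul ℝ A b) (D a))
    (hsurj : Function.Surjective D)
    (hcond : ∀ F H : Dual ℝ (Dual ℝ A),
      ∃ a' : Dual ℝ A, ∀ G : Dual ℝ (Dual ℝ A), ddMap D F (arens1 A H G) = G a')
    (F G : Dual ℝ (Dual ℝ A)) :
    arens1 A F G = arens2 A F G := by
  apply ContinuousLinearMap.ext
  intro φ
  obtain ⟨g, hdd⟩ := exists_eval_repr D hsurj φ
  obtain ⟨a', ha'⟩ := hcond g F
  have h1 : arens1 A F G φ = G a' := by rw [← ha' G, hdd]
  have h2 : a' = F.comp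
      (((ContinuousLinearMap.compL ℝ A A ℝ).flip.comp
        (ContinuousLinearMap.mul ℝ A).flip).flip φ) := by
    apply ContinuousLinearMap.ext
    intro b
    have hb := ha' (inclusionInDoubleDual ℝ A b)
    rw [hdd] at hb
    have hb' : a' b = arens1 A F (inclusionInDoubleDual ℝ A b) φ := by
      rw [hb]; exact dual_def ℝ A b a'
    rw [hb']
    simp only [arens1, arensExt, flip_apply, coe_comp', Function.comp_apply, compL_apply,
      mul_apply', dual_def]
    refine congrArg F ?_
    apply ContinuousLinearMap.ext
    intro a
    simp only [coe_comp', Function.comp_apply, flip_apply, compL_apply, mul_apply', dual_def]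
  have h3 : arens2 A F G φ = G a' := by
    rw [h2]
    simp only [arens2, arensExt, flip_apply, coe_comp', Function.comp_apply, compL_apply,
      mul_apply', dual_def]
  rw [h1, h3]
end
end
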